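/- arXiv:1108.2835 — 4 statements merged into one kernel-verified Lean document; each statement's English description precedes it below -/
import Mathlib

section
/- For bounded measurable functions g1, g2, f1, f2 on a finite measure space, with Z_i = ∫ e^{g_i} dν, one has |∫ f2 e^{g2} Z_2^{-1} dν − ∫ f1 e^{g1} Z_1^{-1} dν| ≤ ‖f2 − f1‖_∞ + 2(‖f1‖_∞ + ‖f2‖_∞)‖g2 − g1‖_∞. -/
open MeasureTheory Real

private lemma gibbs_integrable_of_bdd {Y : Type*} [MeasurableSpace Y] {ν : Measure Y}
    [IsFiniteMeasure ν] {f : Y → ℝ} (hm : Measurable f) {C : ℝ} (hb : ∀ y, |f y| ≤ C) :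
    Integrable f ν :=
  ⟨hm.aestronglyMeasurable,
    MeasureTheory.HasFiniteIntegral.of_bounded (C := C) (Filter.Eventually.of_forall hb)⟩

private lemma gibbs_exp_abs_diff (a b : ℝ) :
    |Real.exp a - Real.exp b| ≤ (Real.exp a + Real.exp b) * |a - b| := by
  wlog h : b ≤ a generalizing a b
  · have h2 := this b a (le_of_not_ge h)
    rw [abs_sub_comm, add_comm, abs_sub_comm a b]; exact h2
  rw [abs_of_nonneg (sub_nonneg.2 (exp_le_exp.2 h)), abs_of_nonneg (sub_nonneg.2 h)]
  have h1 : Real.exp (b - a) ≥ 1 + (b - a) := by linarith [Real.add_one_le_exp (b - a)]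
  have h2 : Real.exp a - Real.exp b = Real.exp a * (1 - Real.exp (b - a)) := by
    rw [mul_sub, mul_one, ← Real.exp_add]; ring_nf
  nlinarith [Real.exp_pos a, Real.exp_pos b, Real.exp_pos (b - a)]

/-- Bound on the difference of Gibbs expectations: for bounded measurable
`g1, g2, f1, f2` on a finite nonzero measure space, with `Z_i = ∫ exp (g_i) dν`,
`|∫ f2 e^{g2}/Z2 − ∫ f1 e^{g1}/Z1| ≤ ‖f2 − f1‖_∞ + 2(‖f1‖_∞ + ‖f2‖_∞)‖g2 − g1‖_∞`. -/
theorem gibbs_expectation_comparison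
    {Y : Type*} [MeasurableSpace Y] (ν : Measure Y) [IsFiniteMeasure ν] (hν : ν ≠ 0)
    (g1 g2 f1 f2 : Y → ℝ)
    (hmg1 : Measurable g1) (hmg2 : Measurable g2)
    (hmf1 : Measurable f1) (hmf2 : Measurable f2)
    (Mg1 : ℝ) (hbg1 : ∀ y, |g1 y| ≤ Mg1) (Mg2 : ℝ) (hbg2 : ∀ y, |g2 y| ≤ Mg2)
    (F1 : ℝ) (hbf1 : ∀ y, |f1 y| ≤ F1) (F2 : ℝ) (hbf2 : ∀ y, |f2 y| ≤ F2)
    (Cf : ℝ) (hCf : ∀ y, |f2 y - f1 y| ≤ Cf)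
    (Cg : ℝ) (hCg : ∀ y, |g2 y - g1 y| ≤ Cg) :
    |(∫ y, f2 y * Real.exp (g2 y) ∂ν) / (∫ y, Real.exp (g2 y) ∂ν)
      - (∫ y, f1 y * Real.exp (g1 y) ∂ν) / (∫ y, Real.exp (g1 y) ∂ν)|
      ≤ Cf + 2 * (F1 + F2) * Cg := by
  -- nonemptiness and nonnegativity of bounds
  obtain ⟨y0, -⟩ := MeasureTheory.nonempty_of_measure_ne_zero
    (Measure.measure_univ_ne_zero.2 hν)
  have hF1 : 0 ≤ F1 := le_trans (abs_nonneg _) (hbf1 y0)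
  have hF2 : 0 ≤ F2 := le_trans (abs_nonneg _) (hbf2 y0)
  have hCf0 : 0 ≤ Cf := le_trans (abs_nonneg _) (hCf y0)
  have hCg0 : 0 ≤ Cg := le_trans (abs_nonneg _) (hCg y0)
  -- pointwise bounds on exponentials
  have heg1 : ∀ y, |Real.exp (g1 y)| ≤ Real.exp Mg1 := fun y => by
    rw [abs_of_pos (exp_pos _)]
    exact exp_le_exp.2 (le_trans (le_abs_self _) (hbg1 y))
  have heg2 : ∀ y, |Real.exp (g2 y)| ≤ Real.exp Mg2 := fun y => by
    rw [abs_of_pos (exp_pos _)]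
    exact exp_le_exp.2 (le_trans (le_abs_self _) (hbg2 y))
  -- integrability facts
  have hie1 : Integrable (fun y => Real.exp (g1 y)) ν := gibbs_integrable_of_bdd hmg1.exp heg1
  have hie2 : Integrable (fun y => Real.exp (g2 y)) ν := gibbs_integrable_of_bdd hmg2.exp heg2
  set Z1 : ℝ := ∫ y, Real.exp (g1 y) ∂ν with hZ1def
  set Z2 : ℝ := ∫ y, Real.exp (g2 y) ∂ν with hZ2def
  set A1 : ℝ := ∫ y, f1 y * Real.exp (g1 y) ∂ν with hA1def
  set A2 : ℝ := ∫ y, f2 y * Real.exp (g2 y) ∂ν with hA2def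
  -- positivity of Z1, Z2
  have hνu : 0 < (ν Set.univ).toReal :=
    ENNReal.toReal_pos (Measure.measure_univ_ne_zero.2 hν) (measure_ne_top _ _)
  have hZpos : ∀ (g : Y → ℝ) (M : ℝ), Measurable g → (∀ y, |g y| ≤ M) →
      0 < ∫ y, Real.exp (g y) ∂ν := by
    intro g M hm hb
    have h1 : ∀ y, Real.exp (-M) ≤ Real.exp (g y) := fun y =>
      exp_le_exp.2 (neg_le_of_abs_le (hb y))
    have h2 : (∫ _ : Y, Real.exp (-M) ∂ν) ≤ ∫ y, Real.exp (g y) ∂ν :=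
      integral_mono (integrable_const _)
        (gibbs_integrable_of_bdd hm.exp (fun y => by
          rw [abs_of_pos (exp_pos _)]
          exact exp_le_exp.2 (le_trans (le_abs_self _) (hb y)))) h1
    rw [integral_const, smul_eq_mul] at h2
    exact lt_of_lt_of_le (mul_pos hνu (exp_pos _)) h2
  have hZ1 : 0 < Z1 := hZpos g1 Mg1 hmg1 hbg1
  have hZ2 : 0 < Z2 := hZpos g2 Mg2 hmg2 hbg2
  -- single-variable integrability of the products
  have hbnd : ∀ (f g : Y → ℝ) (F M : ℝ), (∀ y, |f y| ≤ F) → (∀ y, |g y| ≤ M) →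
      ∀ y, |f y * Real.exp (g y)| ≤ F * Real.exp M := by
    intro f g F M hf hg y
    rw [abs_mul, abs_of_pos (exp_pos _)]
    exact mul_le_mul (hf y) (exp_le_exp.2 (le_trans (le_abs_self _) (hg y)))
      (exp_pos _).le (le_trans (abs_nonneg _) (hf y))
  have hiJ2 : Integrable (fun y => (f2 y - f1 y) * Real.exp (g2 y)) ν :=
    gibbs_integrable_of_bdd ((hmf2.sub hmf1).mul hmg2.exp)
      (hbnd _ _ Cf Mg2 hCf hbg2)
  have hiJ1 : Integrable (fun y => (f2 y - f1 y) * Real.exp (g1 y)) ν :=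
    gibbs_integrable_of_bdd ((hmf2.sub hmf1).mul hmg1.exp)
      (hbnd _ _ Cf Mg1 hCf hbg1)
  have hφ : ∀ y, |f1 y + f2 y| ≤ F1 + F2 := fun y =>
    le_trans (abs_add_le _ _) (add_le_add (hbf1 y) (hbf2 y))
  have hiP2 : Integrable (fun y => (f1 y + f2 y) * Real.exp (g2 y)) ν :=
    gibbs_integrable_of_bdd ((hmf1.add hmf2).mul hmg2.exp)
      (hbnd _ _ (F1 + F2) Mg2 hφ hbg2)
  have hiP1 : Integrable (fun y => (f1 y + f2 y) * Real.exp (g1 y)) ν :=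
    gibbs_integrable_of_bdd ((hmf1.add hmf2).mul hmg1.exp)
      (hbnd _ _ (F1 + F2) Mg1 hφ hbg1)
  set J2 : ℝ := ∫ y, (f2 y - f1 y) * Real.exp (g2 y) ∂ν with hJ2def
  set J1 : ℝ := ∫ y, (f2 y - f1 y) * Real.exp (g1 y) ∂ν with hJ1def
  set P2 : ℝ := ∫ y, (f1 y + f2 y) * Real.exp (g2 y) ∂ν with hP2def
  set P1 : ℝ := ∫ y, (f1 y + f2 y) * Real.exp (g1 y) ∂ν with hP1def
  -- the algebraic identity
  have hJP2 : J2 + P2 = 2 * A2 := by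
    rw [hJ2def, hP2def, ← integral_add hiJ2 hiP2]
    have : (fun y => (f2 y - f1 y) * Real.exp (g2 y) + (f1 y + f2 y) * Real.exp (g2 y))
        = fun y => 2 * (f2 y * Real.exp (g2 y)) := by funext y; ring
    rw [this, integral_const_mul _ _, hA2def]
  have hJP1 : J1 - P1 = -(2 * A1) := by
    rw [hJ1def, hP1def, ← integral_sub hiJ1 hiP1]
    have : (fun y => (f2 y - f1 y) * Real.exp (g1 y) - (f1 y + f2 y) * Real.exp (g1 y))
        = fun y => -2 * (f1 y * Real.exp (g1 y)) := by funext y; ring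
    rw [this, integral_const_mul _ _, hA1def]; ring
  have hid : 2 * (A2 * Z1 - Z2 * A1) = (Z1 * J2 + Z2 * J1) + (Z1 * P2 - Z2 * P1) := by
    linear_combination (-Z1) * hJP2 + (-Z2) * hJP1
  -- bound on T0 = Z1*J2 + Z2*J1
  have hJ2b : |J2| ≤ Cf * Z2 := by
    have := norm_integral_le_of_norm_le (μ := ν)
      (f := fun y => (f2 y - f1 y) * Real.exp (g2 y))
      (g := fun y => Cf * Real.exp (g2 y)) (hie2.const_mul Cf)
      (Filter.Eventually.of_forall fun y => by
        rw [Real.norm_eq_abs, abs_mul, abs_of_pos (exp_pos _)]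
        exact mul_le_mul_of_nonneg_right (hCf y) (exp_pos _).le)
    rwa [Real.norm_eq_abs, integral_const_mul _ _] at this
  have hJ1b : |J1| ≤ Cf * Z1 := by
    have := norm_integral_le_of_norm_le (μ := ν)
      (f := fun y => (f2 y - f1 y) * Real.exp (g1 y))
      (g := fun y => Cf * Real.exp (g1 y)) (hie1.const_mul Cf)
      (Filter.Eventually.of_forall fun y => by
        rw [Real.norm_eq_abs, abs_mul, abs_of_pos (exp_pos _)]
        exact mul_le_mul_of_nonneg_right (hCf y) (exp_pos _).le)
    rwa [Real.norm_eq_abs, integral_const_mul _ _] at this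
  have hT0 : |Z1 * J2 + Z2 * J1| ≤ 2 * Cf * (Z2 * Z1) := by
    calc |Z1 * J2 + Z2 * J1| ≤ |Z1 * J2| + |Z2 * J1| := abs_add_le _ _
      _ = Z1 * |J2| + Z2 * |J1| := by
          rw [abs_mul, abs_mul, abs_of_pos hZ1, abs_of_pos hZ2]
      _ ≤ Z1 * (Cf * Z2) + Z2 * (Cf * Z1) :=
          add_le_add (mul_le_mul_of_nonneg_left hJ2b hZ1.le)
            (mul_le_mul_of_nonneg_left hJ1b hZ2.le)
      _ = 2 * Cf * (Z2 * Z1) := by ring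
  -- bound on R = Z1*P2 - Z2*P1 via a product-measure representation
  have hmprod1 : Measurable fun p : Y × Y =>
      (f1 p.1 + f2 p.1) * Real.exp (g2 p.1) * Real.exp (g1 p.2) :=
    ((((hmf1.comp measurable_fst).add (hmf2.comp measurable_fst)).mul
      ((hmg2.comp measurable_fst)).exp).mul ((hmg1.comp measurable_snd)).exp)
  have hmprod2 : Measurable fun p : Y × Y =>
      (f1 p.1 + f2 p.1) * Real.exp (g1 p.1) * Real.exp (g2 p.2) :=
    ((((hmf1.comp measurable_fst).add (hmf2.comp measurable_fst)).mul
      ((hmg1.comp measurable_fst)).exp).mul ((hmg2.comp measurable_snd)).exp)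
  have hiprod1 : Integrable (fun p : Y × Y =>
      (f1 p.1 + f2 p.1) * Real.exp (g2 p.1) * Real.exp (g1 p.2)) (ν.prod ν) :=
    gibbs_integrable_of_bdd hmprod1 (C := (F1 + F2) * Real.exp Mg2 * Real.exp Mg1)
      (fun p => by
        rw [abs_mul, abs_mul]
        exact mul_le_mul (mul_le_mul (hφ p.1) (heg2 p.1) (abs_nonneg _)
            (by linarith)) (heg1 p.2) (abs_nonneg _) (by positivity))
  have hiprod2 : Integrable (fun p : Y × Y =>
      (f1 p.1 + f2 p.1) * Real.exp (g1 p.1) * Real.exp (g2 p.2)) (ν.prod ν) :=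
    gibbs_integrable_of_bdd hmprod2 (C := (F1 + F2) * Real.exp Mg1 * Real.exp Mg2)
      (fun p => by
        rw [abs_mul, abs_mul]
        exact mul_le_mul (mul_le_mul (hφ p.1) (heg1 p.1) (abs_nonneg _)
            (by linarith)) (heg2 p.2) (abs_nonneg _) (by positivity))
  have hfac1 : Z1 * P2 = ∫ p : Y × Y,
      (f1 p.1 + f2 p.1) * Real.exp (g2 p.1) * Real.exp (g1 p.2) ∂(ν.prod ν) := by
    rw [MeasureTheory.integral_prod_mul
      (fun y => (f1 y + f2 y) * Real.exp (g2 y)) (fun y => Real.exp (g1 y))]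
    rw [hP2def, hZ1def]; ring
  have hfac2 : Z2 * P1 = ∫ p : Y × Y,
      (f1 p.1 + f2 p.1) * Real.exp (g1 p.1) * Real.exp (g2 p.2) ∂(ν.prod ν) := by
    rw [MeasureTheory.integral_prod_mul
      (fun y => (f1 y + f2 y) * Real.exp (g1 y)) (fun y => Real.exp (g2 y))]
    rw [hP1def, hZ2def]; ring
  have hRrep : Z1 * P2 - Z2 * P1 = ∫ p : Y × Y,
      (f1 p.1 + f2 p.1) *
        (Real.exp (g2 p.1 + g1 p.2) - Real.exp (g1 p.1 + g2 p.2)) ∂(ν.prod ν) := by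
    rw [hfac1, hfac2, ← integral_sub hiprod1 hiprod2]
    congr 1; funext p; rw [Real.exp_add, Real.exp_add]; ring
  -- integrable bound for R
  have hiea : Integrable (fun p : Y × Y => Real.exp (g2 p.1 + g1 p.2)) (ν.prod ν) :=
    gibbs_integrable_of_bdd
      (((hmg2.comp measurable_fst).add (hmg1.comp measurable_snd)).exp)
      (C := Real.exp (Mg2 + Mg1)) (fun p => by
        rw [abs_of_pos (exp_pos _)]
        exact exp_le_exp.2 (add_le_add (le_trans (le_abs_self _) (hbg2 p.1))
          (le_trans (le_abs_self _) (hbg1 p.2))))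
  have hieb : Integrable (fun p : Y × Y => Real.exp (g1 p.1 + g2 p.2)) (ν.prod ν) :=
    gibbs_integrable_of_bdd
      (((hmg1.comp measurable_fst).add (hmg2.comp measurable_snd)).exp)
      (C := Real.exp (Mg1 + Mg2)) (fun p => by
        rw [abs_of_pos (exp_pos _)]
        exact exp_le_exp.2 (add_le_add (le_trans (le_abs_self _) (hbg1 p.1))
          (le_trans (le_abs_self _) (hbg2 p.2))))
  have hia : (∫ p : Y × Y, Real.exp (g2 p.1 + g1 p.2) ∂(ν.prod ν)) = Z2 * Z1 := by
    simp_rw [Real.exp_add]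
    rw [MeasureTheory.integral_prod_mul (fun y => Real.exp (g2 y)) (fun y => Real.exp (g1 y))]
  have hib : (∫ p : Y × Y, Real.exp (g1 p.1 + g2 p.2) ∂(ν.prod ν)) = Z1 * Z2 := by
    simp_rw [Real.exp_add]
    rw [MeasureTheory.integral_prod_mul (fun y => Real.exp (g1 y)) (fun y => Real.exp (g2 y))]
  have hRb : |Z1 * P2 - Z2 * P1| ≤ 4 * ((F1 + F2) * Cg) * (Z2 * Z1) := by
    rw [hRrep]
    have hb := norm_integral_le_of_norm_le (μ := ν.prod ν)
      (f := fun p : Y × Y => (f1 p.1 + f2 p.1) *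
        (Real.exp (g2 p.1 + g1 p.2) - Real.exp (g1 p.1 + g2 p.2)))
      (g := fun p : Y × Y => (F1 + F2) * (2 * Cg) *
        (Real.exp (g2 p.1 + g1 p.2) + Real.exp (g1 p.1 + g2 p.2)))
      ((hiea.add hieb).const_mul _)
      (Filter.Eventually.of_forall fun p => by
        rw [Real.norm_eq_abs, abs_mul]
        have hab : |(g2 p.1 + g1 p.2) - (g1 p.1 + g2 p.2)| ≤ 2 * Cg := by
          have h1 := hCg p.1
          have h2 := hCg p.2
          have : (g2 p.1 + g1 p.2) - (g1 p.1 + g2 p.2)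
              = (g2 p.1 - g1 p.1) - (g2 p.2 - g1 p.2) := by ring
          rw [this]
          calc |(g2 p.1 - g1 p.1) - (g2 p.2 - g1 p.2)|
              ≤ |g2 p.1 - g1 p.1| + |g2 p.2 - g1 p.2| := abs_sub _ _
            _ ≤ 2 * Cg := by linarith
        have hkey := gibbs_exp_abs_diff (g2 p.1 + g1 p.2) (g1 p.1 + g2 p.2)
        have hpos : 0 < Real.exp (g2 p.1 + g1 p.2) + Real.exp (g1 p.1 + g2 p.2) :=
          add_pos (exp_pos _) (exp_pos _)
        calc |f1 p.1 + f2 p.1| * |Real.exp (g2 p.1 + g1 p.2) - Real.exp (g1 p.1 + g2 p.2)|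
            ≤ (F1 + F2) * ((Real.exp (g2 p.1 + g1 p.2) + Real.exp (g1 p.1 + g2 p.2))
                * (2 * Cg)) := by
              apply mul_le_mul (hφ p.1) _ (abs_nonneg _) (by linarith)
              exact le_trans hkey (mul_le_mul_of_nonneg_left hab hpos.le)
          _ = (F1 + F2) * (2 * Cg) * (Real.exp (g2 p.1 + g1 p.2)
                + Real.exp (g1 p.1 + g2 p.2)) := by ring)
    rw [Real.norm_eq_abs] at hb
    calc |∫ p : Y × Y, (f1 p.1 + f2 p.1) *
          (Real.exp (g2 p.1 + g1 p.2) - Real.exp (g1 p.1 + g2 p.2)) ∂(ν.prod ν)|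
        ≤ ∫ p : Y × Y, (F1 + F2) * (2 * Cg) *
          (Real.exp (g2 p.1 + g1 p.2) + Real.exp (g1 p.1 + g2 p.2)) ∂(ν.prod ν) := hb
      _ = 4 * ((F1 + F2) * Cg) * (Z2 * Z1) := by
          rw [integral_const_mul _ _, integral_add hiea hieb, hia, hib]; ring
  -- final assembly
  rw [div_sub_div _ _ hZ2.ne' hZ1.ne', abs_div, abs_of_pos (mul_pos hZ2 hZ1),
    div_le_iff₀ (mul_pos hZ2 hZ1)]
  have habs2 : |2 * (A2 * Z1 - Z2 * A1)| = 2 * |A2 * Z1 - Z2 * A1| := by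
    rw [abs_mul, abs_two]
  have htri : |(Z1 * J2 + Z2 * J1) + (Z1 * P2 - Z2 * P1)|
      ≤ |Z1 * J2 + Z2 * J1| + |Z1 * P2 - Z2 * P1| := abs_add_le _ _
  have h4 : |2 * (A2 * Z1 - Z2 * A1)| = |(Z1 * J2 + Z2 * J1) + (Z1 * P2 - Z2 * P1)| := by
    rw [hid]
  nlinarith [hT0, hRb, htri, h4, habs2]
end

section
/- For bounded measurable functions g1, g2, f1, f2 on a finite measure space, setting ḡ_t = t g2 + (1−t) g1, Z_t = ∫ e^{ḡ_t} dν, and f̄_t = t f2 + (1−t) f1, the following identity holds: ∫ f2 e^{g2} Z_1^{-1} dν − ∫ f1 e^{g1} Z_0^{-1} dν = ∫_0^1 ∫ (f2 − f1) e^{ḡ_t} Z_t^{-1} dν dt + ∫_0^1 Cov_t(f̄_t(X), (g2 − g1)(X)) dt, where Cov_t denotes the covariance of random variables under the probability density e^{ḡ_t}/Z_t with respect to ν. -/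
open MeasureTheory Real

/-- Partition function along the linear interpolation `ḡ_t = t g2 + (1-t) g1`. -/
noncomputable def gibbsZ {Y : Type*} [MeasurableSpace Y] (ν : Measure Y)
    (g1 g2 : Y → ℝ) (t : ℝ) : ℝ :=
  ∫ y, Real.exp (t * g2 y + (1 - t) * g1 y) ∂ν

/-- Expectation of `f` under the Gibbs density `e^{ḡ_t}/Z_t`. -/
noncomputable def gibbsE {Y : Type*} [MeasurableSpace Y] (ν : Measure Y)
    (g1 g2 : Y → ℝ) (t : ℝ) (f : Y → ℝ) : ℝ :=
  (∫ y, f y * Real.exp (t * g2 y + (1 - t) * g1 y) ∂ν) / gibbsZ ν g1 g2 t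

lemma gibbs_exp_bound {Y : Type*} {g1 g2 : Y → ℝ} {M1 M2 : ℝ}
    (hb1 : ∀ y, |g1 y| ≤ M1) (hb2 : ∀ y, |g2 y| ≤ M2) {s : ℝ} (y : Y) :
    Real.exp (s * g2 y + (1 - s) * g1 y) ≤ Real.exp (|s| * M2 + |1 - s| * M1) := by
  apply Real.exp_le_exp.2
  have h1 : s * g2 y ≤ |s| * M2 :=
    (le_abs_self _).trans (by rw [abs_mul]; exact mul_le_mul_of_nonneg_left (hb2 y) (abs_nonneg s))
  have h2 : (1 - s) * g1 y ≤ |1 - s| * M1 :=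
    (le_abs_self _).trans
      (by rw [abs_mul]; exact mul_le_mul_of_nonneg_left (hb1 y) (abs_nonneg (1 - s)))
  linarith

lemma gibbs_int {Y : Type*} [MeasurableSpace Y] (ν : Measure Y) [IsFiniteMeasure ν]
    {g1 g2 h : Y → ℝ} (hmg1 : Measurable g1) (hmg2 : Measurable g2) (hm : Measurable h)
    {K M1 M2 : ℝ} (hb : ∀ y, |h y| ≤ K) (hb1 : ∀ y, |g1 y| ≤ M1) (hb2 : ∀ y, |g2 y| ≤ M2)
    (t : ℝ) :
    Integrable (fun y => h y * Real.exp (t * g2 y + (1 - t) * g1 y)) ν := by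
  refine ⟨(hm.mul ((hmg2.const_mul t).add (hmg1.const_mul (1 - t))).exp).aestronglyMeasurable, ?_⟩
  refine HasFiniteIntegral.of_bounded (C := K * Real.exp (|t| * M2 + |1 - t| * M1)) ?_
  filter_upwards with y
  rw [Real.norm_eq_abs, abs_mul, abs_of_pos (Real.exp_pos _)]
  exact mul_le_mul (hb y) (gibbs_exp_bound hb1 hb2 y) (Real.exp_pos _).le
    ((abs_nonneg _).trans (hb y))

lemma gibbs_hasDerivAt {Y : Type*} [MeasurableSpace Y] (ν : Measure Y) [IsFiniteMeasure ν]
    {g1 g2 h : Y → ℝ} (hmg1 : Measurable g1) (hmg2 : Measurable g2) (hm : Measurable h)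
    {K M1 M2 : ℝ} (hb : ∀ y, |h y| ≤ K) (hb1 : ∀ y, |g1 y| ≤ M1) (hb2 : ∀ y, |g2 y| ≤ M2)
    (t : ℝ) :
    HasDerivAt (fun s => ∫ y, h y * Real.exp (s * g2 y + (1 - s) * g1 y) ∂ν)
      (∫ y, (h y * (g2 y - g1 y)) * Real.exp (t * g2 y + (1 - t) * g1 y) ∂ν) t := by
  have key : ∀ (x : ℝ) (y : Y),
      HasDerivAt (fun s : ℝ => h y * Real.exp (s * g2 y + (1 - s) * g1 y))
        ((h y * (g2 y - g1 y)) * Real.exp (x * g2 y + (1 - x) * g1 y)) x := by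
    intro x y
    have h1 : HasDerivAt (fun s : ℝ => s * g2 y + (1 - s) * g1 y) (g2 y - g1 y) x := by
      have : HasDerivAt (fun s : ℝ => s * g2 y + (1 - s) * g1 y) (1 * g2 y + (0 - 1) * g1 y) x :=
        ((hasDerivAt_id x).mul_const (g2 y)).add
        (((hasDerivAt_const x (1 : ℝ)).sub (hasDerivAt_id x)).mul_const (g1 y))
      convert this using 1; ring
    have h3 : HasDerivAt (fun s : ℝ => h y * Real.exp (s * g2 y + (1 - s) * g1 y))
        (h y * (Real.exp (x * g2 y + (1 - x) * g1 y) * (g2 y - g1 y))) x :=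
      h1.exp.const_mul (h y)
    convert h3 using 1; ring
  have hmc : Measurable fun y => h y * (g2 y - g1 y) := hm.mul (hmg2.sub hmg1)
  have main := hasDerivAt_integral_of_dominated_loc_of_deriv_le
    (F := fun s y => h y * Real.exp (s * g2 y + (1 - s) * g1 y))
    (F' := fun s y => (h y * (g2 y - g1 y)) * Real.exp (s * g2 y + (1 - s) * g1 y))
    (x₀ := t) (μ := ν)
    (bound := fun _ => (K * (M2 + M1)) * Real.exp ((|t| + 1) * M2 + (|t| + 2) * M1))
    (s := Metric.ball t 1) (Metric.ball_mem_nhds t one_pos)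
    (Filter.Eventually.of_forall fun x =>
      ((hm.mul ((hmg2.const_mul x).add (hmg1.const_mul (1 - x))).exp).aestronglyMeasurable))
    (gibbs_int ν hmg1 hmg2 hm hb hb1 hb2 t)
    ((hmc.mul ((hmg2.const_mul t).add (hmg1.const_mul (1 - t))).exp).aestronglyMeasurable)
    ?_ (integrable_const _)
    (Filter.Eventually.of_forall fun y x _ => key x y)
  · exact main.2
  · filter_upwards with y x hx
    rw [Real.norm_eq_abs, abs_mul, abs_of_pos (Real.exp_pos _), abs_mul]
    have hxb : |x| ≤ |t| + 1 := by
      have := abs_sub_abs_le_abs_sub x t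
      simp only [Metric.mem_ball, Real.dist_eq] at hx
      linarith
    have hx1 : |1 - x| ≤ |t| + 2 := by
      have h0 : |1 - x| ≤ |(1 : ℝ)| + |x| := abs_sub _ _
      simp only [abs_one] at h0
      linarith
    have hM2 : (0 : ℝ) ≤ M2 := (abs_nonneg _).trans (hb2 y)
    have hM1 : (0 : ℝ) ≤ M1 := (abs_nonneg _).trans (hb1 y)
    have hexp : Real.exp (x * g2 y + (1 - x) * g1 y)
        ≤ Real.exp ((|t| + 1) * M2 + (|t| + 2) * M1) := by
      refine (gibbs_exp_bound hb1 hb2 y).trans (Real.exp_le_exp.2 ?_)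
      have h2 := mul_le_mul_of_nonneg_right hxb hM2
      have h3 := mul_le_mul_of_nonneg_right hx1 hM1
      linarith
    have habs : |h y| * |g2 y - g1 y| ≤ K * (M2 + M1) := by
      have hc : |g2 y - g1 y| ≤ M2 + M1 :=
        (abs_sub _ _).trans (add_le_add (hb2 y) (hb1 y))
      exact mul_le_mul (hb y) hc (abs_nonneg _) ((abs_nonneg _).trans (hb y))
    exact mul_le_mul habs hexp (Real.exp_pos _).le
      (mul_nonneg ((abs_nonneg _).trans (hb y)) (add_nonneg hM2 hM1))

lemma gibbsZ_pos {Y : Type*} [MeasurableSpace Y] (ν : Measure Y) [IsFiniteMeasure ν]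
    (hν : ν ≠ 0) {g1 g2 : Y → ℝ} (hmg1 : Measurable g1) (hmg2 : Measurable g2)
    {M1 M2 : ℝ} (hb1 : ∀ y, |g1 y| ≤ M1) (hb2 : ∀ y, |g2 y| ≤ M2) (t : ℝ) :
    0 < gibbsZ ν g1 g2 t := by
  haveI : NeZero ν := ⟨hν⟩
  have hint : Integrable (fun y => Real.exp (t * g2 y + (1 - t) * g1 y)) ν := by
    have := gibbs_int ν (h := fun _ => (1 : ℝ)) hmg1 hmg2 measurable_const
      (K := 1) (fun y => by norm_num) hb1 hb2 t
    simpa using this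
  exact integral_exp_pos hint

/-- Numerator integral. -/
noncomputable def gibbsA {Y : Type*} [MeasurableSpace Y] (ν : Measure Y)
    (g1 g2 f : Y → ℝ) (t : ℝ) : ℝ :=
  ∫ y, f y * Real.exp (t * g2 y + (1 - t) * g1 y) ∂ν

lemma gibbs_abstract (A1 A2 B1 B2 C Z : ℝ → ℝ)
    (hZpos : ∀ t, 0 < Z t)
    (hA1 : ∀ t, HasDerivAt A1 (B1 t) t) (hA2 : ∀ t, HasDerivAt A2 (B2 t) t)
    (hZd : ∀ t, HasDerivAt Z (C t) t)
    (hB1 : Continuous B1) (hB2 : Continuous B2) (hCc : Continuous C) :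
    A2 1 / Z 1 - A1 0 / Z 0
      = (∫ t in (0:ℝ)..1, (A2 t - A1 t) / Z t)
        + ∫ t in (0:ℝ)..1, ((t * B2 t + (1 - t) * B1 t) / Z t
            - (t * A2 t + (1 - t) * A1 t) / Z t * (C t / Z t)) := by
  have hA1c : Continuous A1 := continuous_iff_continuousAt.2 fun t => (hA1 t).continuousAt
  have hA2c : Continuous A2 := continuous_iff_continuousAt.2 fun t => (hA2 t).continuousAt
  have hZc : Continuous Z := continuous_iff_continuousAt.2 fun t => (hZd t).continuousAt
  have hZne : ∀ t, Z t ≠ 0 := fun t => (hZpos t).ne'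
  set D1 : ℝ → ℝ := fun t => (A2 t - A1 t) / Z t with hD1
  set D2 : ℝ → ℝ := fun t => (t * B2 t + (1 - t) * B1 t) / Z t
      - (t * A2 t + (1 - t) * A1 t) / Z t * (C t / Z t) with hD2
  have hD1c : Continuous D1 := (hA2c.sub hA1c).div hZc hZne
  have hD2c : Continuous D2 :=
    (((continuous_id.mul hB2).add ((continuous_const.sub continuous_id).mul hB1)).div hZc hZne).sub
      ((((continuous_id.mul hA2c).add
        ((continuous_const.sub continuous_id).mul hA1c)).div hZc hZne).mul (hCc.div hZc hZne))
  have hφ : ∀ t : ℝ, HasDerivAt (fun s => (s * A2 s + (1 - s) * A1 s) / Z s) (D1 t + D2 t) t := by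
    intro t
    have hid : HasDerivAt (fun s : ℝ => s) 1 t := hasDerivAt_id t
    have hN : HasDerivAt (fun s => s * A2 s + (1 - s) * A1 s)
        ((1 * A2 t + t * B2 t) + ((0 - 1) * A1 t + (1 - t) * B1 t)) t :=
      (hid.mul (hA2 t)).add (((hasDerivAt_const t (1:ℝ)).sub hid).mul (hA1 t))
    have hdiv : HasDerivAt (fun s => (s * A2 s + (1 - s) * A1 s) / Z s)
        ((((1 * A2 t + t * B2 t) + ((0 - 1) * A1 t + (1 - t) * B1 t)) * Z t
          - (t * A2 t + (1 - t) * A1 t) * C t) / Z t ^ 2) t :=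
      hN.div (hZd t) (hZne t)
    convert hdiv using 1
    have h0 := hZne t
    simp only [hD1, hD2]
    field_simp
    ring
  have hFTC : ∫ t in (0:ℝ)..1, (D1 t + D2 t)
      = (fun s => (s * A2 s + (1 - s) * A1 s) / Z s) 1
        - (fun s => (s * A2 s + (1 - s) * A1 s) / Z s) 0 :=
    intervalIntegral.integral_eq_sub_of_hasDerivAt (fun t _ => hφ t)
      ((hD1c.add hD2c).intervalIntegrable 0 1)
  have hsplit : (∫ t in (0:ℝ)..1, D1 t) + ∫ t in (0:ℝ)..1, D2 t
      = ∫ t in (0:ℝ)..1, (D1 t + D2 t) :=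
    (intervalIntegral.integral_add (hD1c.intervalIntegrable 0 1)
      (hD2c.intervalIntegrable 0 1)).symm
  rw [hsplit, hFTC]
  norm_num

/-- Comparison lemma: with `f̄_t = t f2 + (1-t) f1`,
`E_1[f2] − E_0[f1] = ∫_0^1 E_t[f2 − f1] dt + ∫_0^1 Cov_t(f̄_t, g2 − g1) dt`. -/
theorem gibbs_comparison_identity
    {Y : Type*} [MeasurableSpace Y] (ν : Measure Y) [IsFiniteMeasure ν] (hν : ν ≠ 0)
    (g1 g2 f1 f2 : Y → ℝ)
    (hmg1 : Measurable g1) (hmg2 : Measurable g2)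
    (hmf1 : Measurable f1) (hmf2 : Measurable f2)
    (Mg1 : ℝ) (hbg1 : ∀ y, |g1 y| ≤ Mg1) (Mg2 : ℝ) (hbg2 : ∀ y, |g2 y| ≤ Mg2)
    (F1 : ℝ) (hbf1 : ∀ y, |f1 y| ≤ F1) (F2 : ℝ) (hbf2 : ∀ y, |f2 y| ≤ F2) :
    gibbsE ν g1 g2 1 f2 - gibbsE ν g1 g2 0 f1
      = (∫ t in (0:ℝ)..1, gibbsE ν g1 g2 t (fun y => f2 y - f1 y))
        + ∫ t in (0:ℝ)..1,
            (gibbsE ν g1 g2 t (fun y => (t * f2 y + (1 - t) * f1 y) * (g2 y - g1 y))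
              - gibbsE ν g1 g2 t (fun y => t * f2 y + (1 - t) * f1 y)
                * gibbsE ν g1 g2 t (fun y => g2 y - g1 y)) := by
  -- normalized bounds
  have hb1' : ∀ y, |g1 y| ≤ |Mg1| := fun y => (hbg1 y).trans (le_abs_self _)
  have hb2' : ∀ y, |g2 y| ≤ |Mg2| := fun y => (hbg2 y).trans (le_abs_self _)
  have hf1' : ∀ y, |f1 y| ≤ |F1| := fun y => (hbf1 y).trans (le_abs_self _)
  have hf2' : ∀ y, |f2 y| ≤ |F2| := fun y => (hbf2 y).trans (le_abs_self _)
  have hc' : ∀ y, |g2 y - g1 y| ≤ |Mg2| + |Mg1| :=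
    fun y => (abs_sub _ _).trans (add_le_add (hb2' y) (hb1' y))
  have hf1c : ∀ y, |f1 y * (g2 y - g1 y)| ≤ |F1| * (|Mg2| + |Mg1|) := fun y => by
    rw [abs_mul]; exact mul_le_mul (hf1' y) (hc' y) (abs_nonneg _) (abs_nonneg _)
  have hf2c : ∀ y, |f2 y * (g2 y - g1 y)| ≤ |F2| * (|Mg2| + |Mg1|) := fun y => by
    rw [abs_mul]; exact mul_le_mul (hf2' y) (hc' y) (abs_nonneg _) (abs_nonneg _)
  have hf1cc : ∀ y, |(f1 y * (g2 y - g1 y)) * (g2 y - g1 y)|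
      ≤ (|F1| * (|Mg2| + |Mg1|)) * (|Mg2| + |Mg1|) := fun y => by
    rw [abs_mul]
    exact mul_le_mul (hf1c y) (hc' y) (abs_nonneg _) (mul_nonneg (abs_nonneg _)
      (add_nonneg (abs_nonneg _) (abs_nonneg _)))
  have hf2cc : ∀ y, |(f2 y * (g2 y - g1 y)) * (g2 y - g1 y)|
      ≤ (|F2| * (|Mg2| + |Mg1|)) * (|Mg2| + |Mg1|) := fun y => by
    rw [abs_mul]
    exact mul_le_mul (hf2c y) (hc' y) (abs_nonneg _) (mul_nonneg (abs_nonneg _)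
      (add_nonneg (abs_nonneg _) (abs_nonneg _)))
  have hcc : ∀ y, |(g2 y - g1 y) * (g2 y - g1 y)| ≤ (|Mg2| + |Mg1|) * (|Mg2| + |Mg1|) :=
    fun y => by
      rw [abs_mul]
      exact mul_le_mul (hc' y) (hc' y) (abs_nonneg _)
        (add_nonneg (abs_nonneg _) (abs_nonneg _))
  have hmc : Measurable fun y => g2 y - g1 y := hmg2.sub hmg1
  have hmf1c : Measurable fun y => f1 y * (g2 y - g1 y) := hmf1.mul hmc
  have hmf2c : Measurable fun y => f2 y * (g2 y - g1 y) := hmf2.mul hmc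
  -- integrability
  have hIf1 := fun t => gibbs_int ν hmg1 hmg2 hmf1 hf1' hb1' hb2' t
  have hIf2 := fun t => gibbs_int ν hmg1 hmg2 hmf2 hf2' hb1' hb2' t
  have hIf1c := fun t => gibbs_int ν hmg1 hmg2 hmf1c hf1c hb1' hb2' t
  have hIf2c := fun t => gibbs_int ν hmg1 hmg2 hmf2c hf2c hb1' hb2' t
  -- derivatives
  have hA1d : ∀ t, HasDerivAt (gibbsA ν g1 g2 f1)
      (gibbsA ν g1 g2 (fun y => f1 y * (g2 y - g1 y)) t) t :=
    fun t => gibbs_hasDerivAt ν hmg1 hmg2 hmf1 hf1' hb1' hb2' t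
  have hA2d : ∀ t, HasDerivAt (gibbsA ν g1 g2 f2)
      (gibbsA ν g1 g2 (fun y => f2 y * (g2 y - g1 y)) t) t :=
    fun t => gibbs_hasDerivAt ν hmg1 hmg2 hmf2 hf2' hb1' hb2' t
  have hB1d : ∀ t, HasDerivAt (gibbsA ν g1 g2 (fun y => f1 y * (g2 y - g1 y)))
      (gibbsA ν g1 g2 (fun y => (f1 y * (g2 y - g1 y)) * (g2 y - g1 y)) t) t :=
    fun t => gibbs_hasDerivAt ν hmg1 hmg2 hmf1c hf1c hb1' hb2' t
  have hB2d : ∀ t, HasDerivAt (gibbsA ν g1 g2 (fun y => f2 y * (g2 y - g1 y)))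
      (gibbsA ν g1 g2 (fun y => (f2 y * (g2 y - g1 y)) * (g2 y - g1 y)) t) t :=
    fun t => gibbs_hasDerivAt ν hmg1 hmg2 hmf2c hf2c hb1' hb2' t
  have hCd : ∀ t, HasDerivAt (gibbsA ν g1 g2 (fun y => g2 y - g1 y))
      (gibbsA ν g1 g2 (fun y => (g2 y - g1 y) * (g2 y - g1 y)) t) t :=
    fun t => gibbs_hasDerivAt ν hmg1 hmg2 hmc hc' hb1' hb2' t
  have hZd : ∀ t, HasDerivAt (gibbsZ ν g1 g2)
      (gibbsA ν g1 g2 (fun y => g2 y - g1 y) t) t := by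
    intro t
    have h1 := gibbs_hasDerivAt ν (h := fun _ => (1:ℝ)) hmg1 hmg2 measurable_const
      (K := 1) (fun y => by norm_num) hb1' hb2' t
    have heq : (fun s => ∫ y, (1:ℝ) * Real.exp (s * g2 y + (1 - s) * g1 y) ∂ν)
        = gibbsZ ν g1 g2 := by funext s; simp [gibbsZ]
    have hval : (∫ y, ((1:ℝ) * (g2 y - g1 y)) * Real.exp (t * g2 y + (1 - t) * g1 y) ∂ν)
        = gibbsA ν g1 g2 (fun y => g2 y - g1 y) t := by simp [gibbsA]
    rw [heq, hval] at h1
    exact h1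
  have hZpos : ∀ t, 0 < gibbsZ ν g1 g2 t :=
    fun t => gibbsZ_pos ν hν hmg1 hmg2 hb1' hb2' t
  have hB1c : Continuous (gibbsA ν g1 g2 (fun y => f1 y * (g2 y - g1 y))) :=
    continuous_iff_continuousAt.2 fun t => (hB1d t).continuousAt
  have hB2c : Continuous (gibbsA ν g1 g2 (fun y => f2 y * (g2 y - g1 y))) :=
    continuous_iff_continuousAt.2 fun t => (hB2d t).continuousAt
  have hCc : Continuous (gibbsA ν g1 g2 (fun y => g2 y - g1 y)) :=
    continuous_iff_continuousAt.2 fun t => (hCd t).continuousAt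
  -- rewriting gibbsE expressions
  have hEsub : ∀ t : ℝ, gibbsE ν g1 g2 t (fun y => f2 y - f1 y)
      = (gibbsA ν g1 g2 f2 t - gibbsA ν g1 g2 f1 t) / gibbsZ ν g1 g2 t := by
    intro t
    have hnum : (∫ y, (f2 y - f1 y) * Real.exp (t * g2 y + (1 - t) * g1 y) ∂ν)
        = gibbsA ν g1 g2 f2 t - gibbsA ν g1 g2 f1 t := by
      unfold gibbsA
      rw [← integral_sub (hIf2 t) (hIf1 t)]
      congr 1; funext y; ring
    unfold gibbsE
    rw [hnum]
  have hEbar : ∀ t : ℝ, gibbsE ν g1 g2 t (fun y => t * f2 y + (1 - t) * f1 y)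
      = (t * gibbsA ν g1 g2 f2 t + (1 - t) * gibbsA ν g1 g2 f1 t) / gibbsZ ν g1 g2 t := by
    intro t
    have hnum : (∫ y, (t * f2 y + (1 - t) * f1 y) * Real.exp (t * g2 y + (1 - t) * g1 y) ∂ν)
        = t * gibbsA ν g1 g2 f2 t + (1 - t) * gibbsA ν g1 g2 f1 t := by
      unfold gibbsA
      rw [show (fun y => (t * f2 y + (1 - t) * f1 y) * Real.exp (t * g2 y + (1 - t) * g1 y))
          = fun y => t * (f2 y * Real.exp (t * g2 y + (1 - t) * g1 y))
            + (1 - t) * (f1 y * Real.exp (t * g2 y + (1 - t) * g1 y)) from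
        funext fun y => by ring]
      rw [integral_add ((hIf2 t).const_mul t) ((hIf1 t).const_mul (1 - t)),
        integral_const_mul, integral_const_mul]
    unfold gibbsE
    rw [hnum]
  have hEbarc : ∀ t : ℝ, gibbsE ν g1 g2 t (fun y => (t * f2 y + (1 - t) * f1 y) * (g2 y - g1 y))
      = (t * gibbsA ν g1 g2 (fun y => f2 y * (g2 y - g1 y)) t
          + (1 - t) * gibbsA ν g1 g2 (fun y => f1 y * (g2 y - g1 y)) t) / gibbsZ ν g1 g2 t := by
    intro t
    have hnum : (∫ y, ((t * f2 y + (1 - t) * f1 y) * (g2 y - g1 y))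
          * Real.exp (t * g2 y + (1 - t) * g1 y) ∂ν)
        = t * gibbsA ν g1 g2 (fun y => f2 y * (g2 y - g1 y)) t
          + (1 - t) * gibbsA ν g1 g2 (fun y => f1 y * (g2 y - g1 y)) t := by
      unfold gibbsA
      rw [show (fun y => ((t * f2 y + (1 - t) * f1 y) * (g2 y - g1 y))
            * Real.exp (t * g2 y + (1 - t) * g1 y))
          = fun y => t * ((f2 y * (g2 y - g1 y)) * Real.exp (t * g2 y + (1 - t) * g1 y))
            + (1 - t) * ((f1 y * (g2 y - g1 y)) * Real.exp (t * g2 y + (1 - t) * g1 y)) from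
        funext fun y => by ring]
      rw [integral_add ((hIf2c t).const_mul t) ((hIf1c t).const_mul (1 - t)),
        integral_const_mul, integral_const_mul]
    unfold gibbsE
    rw [hnum]
  have hEc : ∀ t : ℝ, gibbsE ν g1 g2 t (fun y => g2 y - g1 y)
      = gibbsA ν g1 g2 (fun y => g2 y - g1 y) t / gibbsZ ν g1 g2 t := fun t => rfl
  have h1 : (∫ t in (0:ℝ)..1, gibbsE ν g1 g2 t (fun y => f2 y - f1 y))
      = ∫ t in (0:ℝ)..1, (gibbsA ν g1 g2 f2 t - gibbsA ν g1 g2 f1 t) / gibbsZ ν g1 g2 t :=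
    intervalIntegral.integral_congr fun t _ => hEsub t
  have h2 : (∫ t in (0:ℝ)..1,
        (gibbsE ν g1 g2 t (fun y => (t * f2 y + (1 - t) * f1 y) * (g2 y - g1 y))
          - gibbsE ν g1 g2 t (fun y => t * f2 y + (1 - t) * f1 y)
            * gibbsE ν g1 g2 t (fun y => g2 y - g1 y)))
      = ∫ t in (0:ℝ)..1,
          ((t * gibbsA ν g1 g2 (fun y => f2 y * (g2 y - g1 y)) t
              + (1 - t) * gibbsA ν g1 g2 (fun y => f1 y * (g2 y - g1 y)) t) / gibbsZ ν g1 g2 t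
            - (t * gibbsA ν g1 g2 f2 t + (1 - t) * gibbsA ν g1 g2 f1 t) / gibbsZ ν g1 g2 t
              * (gibbsA ν g1 g2 (fun y => g2 y - g1 y) t / gibbsZ ν g1 g2 t)) :=
    intervalIntegral.integral_congr fun t _ => by rw [hEbarc t, hEbar t, hEc t]
  rw [h1, h2]
  exact gibbs_abstract (gibbsA ν g1 g2 f1) (gibbsA ν g1 g2 f2)
    (gibbsA ν g1 g2 (fun y => f1 y * (g2 y - g1 y)))
    (gibbsA ν g1 g2 (fun y => f2 y * (g2 y - g1 y)))
    (gibbsA ν g1 g2 (fun y => g2 y - g1 y)) (gibbsZ ν g1 g2)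
    hZpos hA1d hA2d hZd hB1c hB2c hCc
end

section
/- Let f_n = g_n + r_n where g_n epi-converges to g on a metric space V, and suppose |r_n(u)| ≤ c(1 + d(u, u_0))·α_n for all u ∈ V, some fixed point u_0, some finite constant c, and a sequence α_n → 0. Then f_n epi-converges to g. -/
open Filter

/-- Epi-limit inferior: `li_e f_n(x) = sup_{k≥1} liminf_n inf_{v ∈ B(x,1/k)} f_n(v)`
(values in the extended reals). -/
noncomputable def epiLiminf {V : Type*} [MetricSpace V] (f : ℕ → V → ℝ) (x : V) : EReal :=
  ⨆ k : ℕ+, Filter.liminf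
    (fun n => ⨅ v ∈ Metric.ball x (1 / ((k : ℕ) : ℝ)), ((f n v : ℝ) : EReal)) Filter.atTop

/-- Epi-limit superior: `ls_e f_n(x) = sup_{k≥1} limsup_n inf_{v ∈ B(x,1/k)} f_n(v)`. -/
noncomputable def epiLimsup {V : Type*} [MetricSpace V] (f : ℕ → V → ℝ) (x : V) : EReal :=
  ⨆ k : ℕ+, Filter.limsup
    (fun n => ⨅ v ∈ Metric.ball x (1 / ((k : ℕ) : ℝ)), ((f n v : ℝ) : EReal)) Filter.atTop

/-- `f_n` epi-converges to `f` if `ls_e f_n(x) ≤ f(x) ≤ li_e f_n(x)` for all `x`. -/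
def EpiConverges {V : Type*} [MetricSpace V] (f : ℕ → V → ℝ) (g : V → ℝ) : Prop :=
  ∀ x : V, epiLimsup f x ≤ ((g x : ℝ) : EReal) ∧ ((g x : ℝ) : EReal) ≤ epiLiminf f x

private lemma ereal_le_of_forall_add {X A : EReal}
    (h : ∀ ε : ℝ, 0 < ε → X ≤ A + (ε : EReal)) : X ≤ A := by
  induction A with
  | bot => simpa using h 1 one_pos
  | top => exact le_top
  | coe a =>
    induction X with
    | bot => exact bot_le
    | top =>
      have := h 1 one_pos
      rw [top_le_iff] at this
      exact absurd this (by norm_cast; exact EReal.coe_ne_top _)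
    | coe x =>
      norm_cast
      refine le_of_forall_pos_le_add fun ε hε => ?_
      have := h ε hε
      norm_cast at this

private lemma ereal_iInf_le_iInf_add {V : Type*} [MetricSpace V] (ε : ℝ) (S : Set V)
    (p q : V → ℝ) (h : ∀ u ∈ S, p u ≤ q u + ε) :
    (⨅ v ∈ S, ((p v : ℝ) : EReal)) ≤ (⨅ v ∈ S, ((q v : ℝ) : EReal)) + (ε : EReal) := by
  rw [← EReal.sub_le_iff_le_add (.inl (EReal.coe_ne_bot ε)) (.inl (EReal.coe_ne_top ε))]
  refine le_iInf₂ fun v hv => ?_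
  rw [EReal.sub_le_iff_le_add (.inl (EReal.coe_ne_bot ε)) (.inl (EReal.coe_ne_top ε))]
  calc (⨅ v ∈ S, ((p v : ℝ) : EReal)) ≤ (p v : EReal) := iInf₂_le v hv
  _ ≤ (q v : EReal) + (ε : EReal) := by exact_mod_cast h v hv

/-- If `f_n = g_n + r_n`, `g_n` epi-converges to `g`, and
`|r_n(u)| ≤ c (1 + d(u,u0)) α_n` with `α_n → 0`, then `f_n` epi-converges to `g`. -/
theorem epiConverges_of_perturbation
    {V : Type*} [MetricSpace V] (f g r : ℕ → V → ℝ) (gl : V → ℝ)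
    (u0 : V) (c : ℝ) (α : ℕ → ℝ)
    (hfg : ∀ n u, f n u = g n u + r n u)
    (hr : ∀ n u, |r n u| ≤ c * (1 + dist u u0) * α n)
    (hα : Tendsto α atTop (nhds 0))
    (hg : EpiConverges g gl) :
    EpiConverges f gl := by
  have hca : ∀ n, 0 ≤ c * α n := by
    intro n
    have h0 := hr n u0
    simp only [dist_self] at h0
    have := abs_nonneg (r n u0)
    nlinarith
  intro x
  set C : ℝ := c * (2 + dist x u0) with hC
  have hβ : Tendsto (fun n => C * α n) atTop (nhds 0) := by
    simpa using hα.const_mul C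
  -- the uniform bound on balls
  have hbound : ∀ (k : ℕ+) (n : ℕ), ∀ u ∈ Metric.ball x (1 / ((k : ℕ) : ℝ)),
      |f n u - g n u| ≤ C * α n := by
    intro k n u hu
    have hrw : f n u - g n u = r n u := by rw [hfg n u]; ring
    rw [hrw]
    have hdux : dist u x < 1 / ((k : ℕ) : ℝ) := Metric.mem_ball.1 hu
    have hk1 : (1 : ℝ) / ((k : ℕ) : ℝ) ≤ 1 := by
      rw [div_le_one (by exact_mod_cast k.pos)]
      exact_mod_cast k.one_le
    have hdu : dist u u0 ≤ 1 + dist x u0 := by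
      have := dist_triangle u x u0
      linarith
    calc |r n u| ≤ c * (1 + dist u u0) * α n := hr n u
    _ = (c * α n) * (1 + dist u u0) := by ring
    _ ≤ (c * α n) * (2 + dist x u0) := mul_le_mul_of_nonneg_left (by linarith) (hca n)
    _ = C * α n := by ring
  -- abbreviations
  set F : ℕ+ → ℕ → EReal := fun k n =>
    ⨅ v ∈ Metric.ball x (1 / ((k : ℕ) : ℝ)), ((f n v : ℝ) : EReal) with hF
  set G : ℕ+ → ℕ → EReal := fun k n =>
    ⨅ v ∈ Metric.ball x (1 / ((k : ℕ) : ℝ)), ((g n v : ℝ) : EReal) with hG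
  have hev : ∀ ε : ℝ, 0 < ε → ∀ᶠ n in atTop, C * α n ≤ ε := by
    intro ε hε
    filter_upwards [hβ (Metric.ball_mem_nhds 0 hε)] with n hn
    have : |C * α n| < ε := by simpa [Real.dist_eq, abs_mul] using hn
    exact (le_abs_self _).trans this.le
  have hFG : ∀ ε : ℝ, 0 < ε → ∀ k : ℕ+,
      (∀ᶠ n in atTop, F k n ≤ G k n + (ε : EReal)) ∧
      (∀ᶠ n in atTop, G k n ≤ F k n + (ε : EReal)) := by
    intro ε hε k
    constructor <;>
    · filter_upwards [hev ε hε] with n hn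
      refine ereal_iInf_le_iInf_add ε _ _ _ fun u hu => ?_
      have := abs_le.1 (hbound k n u hu)
      linarith [this.1, this.2]
  have hconst : ∀ ε : ℝ, limsup (fun _ : ℕ => (ε : EReal)) atTop = (ε : EReal) :=
    fun ε => limsup_const _
  constructor
  · -- limsup part
    refine ereal_le_of_forall_add fun ε hε => ?_
    have step : ∀ k : ℕ+, limsup (F k) atTop ≤ limsup (G k) atTop + (ε : EReal) := by
      intro k
      calc limsup (F k) atTop ≤ limsup (fun n => G k n + (ε : EReal)) atTop :=
            limsup_le_limsup ((hFG ε hε k).1)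
      _ ≤ limsup (G k) atTop + limsup (fun _ : ℕ => (ε : EReal)) atTop := by
            refine EReal.limsup_add_le ?_ ?_
            · right; rw [hconst]; exact EReal.coe_ne_top ε
            · right; rw [hconst]; exact EReal.coe_ne_bot ε
      _ = limsup (G k) atTop + (ε : EReal) := by rw [hconst]
    calc epiLimsup f x ≤ ⨆ k : ℕ+, (limsup (G k) atTop + (ε : EReal)) :=
          iSup_mono step
    _ ≤ (⨆ k : ℕ+, limsup (G k) atTop) + (ε : EReal) :=
          iSup_le fun k => add_le_add_left (le_iSup (fun k => limsup (G k) atTop) k) _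
    _ = epiLimsup g x + (ε : EReal) := rfl
    _ ≤ (gl x : EReal) + (ε : EReal) := add_le_add_left (hg x).1 _
  · -- liminf part
    refine ereal_le_of_forall_add fun ε hε => ?_
    have step : ∀ k : ℕ+, liminf (G k) atTop ≤ liminf (F k) atTop + (ε : EReal) := by
      intro k
      calc liminf (G k) atTop ≤ liminf (fun n => (ε : EReal) + F k n) atTop := by
            refine liminf_le_liminf ?_
            filter_upwards [(hFG ε hε k).2] with n hn
            rw [add_comm]; exact hn
      _ ≤ limsup (fun _ : ℕ => (ε : EReal)) atTop + liminf (F k) atTop := by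
            refine EReal.liminf_add_le ?_ ?_
            · left; rw [hconst]; exact EReal.coe_ne_bot ε
            · left; rw [hconst]; exact EReal.coe_ne_top ε
      _ = liminf (F k) atTop + (ε : EReal) := by rw [hconst, add_comm]
    calc (gl x : EReal) ≤ epiLiminf g x := (hg x).2
    _ ≤ ⨆ k : ℕ+, (liminf (F k) atTop + (ε : EReal)) := iSup_mono step
    _ ≤ (⨆ k : ℕ+, liminf (F k) atTop) + (ε : EReal) :=
          iSup_le fun k => add_le_add_left (le_iSup (fun k => liminf (F k) atTop) k) _
    _ = epiLiminf f x + (ε : EReal) := rfl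
end

section
/- Suppose f_n epi-converges to f on a metric space V, x_n minimizes f_n for each n, and x_n → x̄. Then x̄ minimizes f. -/
open Filter

/-- If `f_n` epi-converges to `f`, `x_n` minimizes `f_n`, and `x_n → x̄`,
then `x̄` minimizes `f`. -/
theorem argmin_of_epiConverges
    {V : Type*} [MetricSpace V] (f : ℕ → V → ℝ) (fl : V → ℝ)
    (x : ℕ → V) (xbar : V)
    (hepi : EpiConverges f fl)
    (hmin : ∀ n (v : V), f n (x n) ≤ f n v)
    (hconv : Tendsto x atTop (nhds xbar)) :
    ∀ v : V, fl xbar ≤ fl v := by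
  intro v
  have h1 : ((fl xbar : ℝ) : EReal) ≤ epiLiminf f xbar := (hepi xbar).2
  have h2 : epiLimsup f v ≤ ((fl v : ℝ) : EReal) := (hepi v).1
  have key : epiLiminf f xbar ≤ epiLimsup f v := by
    apply iSup_le
    intro k
    have hkpos : (0 : ℝ) < 1 / ((k : ℕ) : ℝ) := by positivity
    -- liminf of inf over ball ≤ liminf f n (x n)
    have hA : Filter.liminf
        (fun n => ⨅ w ∈ Metric.ball xbar (1 / ((k : ℕ) : ℝ)), ((f n w : ℝ) : EReal))
        Filter.atTop ≤ Filter.liminf (fun n => ((f n (x n) : ℝ) : EReal)) Filter.atTop := by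
      refine Filter.liminf_le_liminf ?_ (by isBoundedDefault) (by isBoundedDefault)
      have hmem : ∀ᶠ n in atTop, x n ∈ Metric.ball xbar (1 / ((k : ℕ) : ℝ)) :=
        hconv (Metric.ball_mem_nhds xbar hkpos)
      filter_upwards [hmem] with n hn
      exact iInf₂_le (x n) hn
    have hB : Filter.liminf (fun n => ((f n (x n) : ℝ) : EReal)) Filter.atTop ≤
        Filter.liminf
        (fun n => ⨅ w ∈ Metric.ball v (1 / (((1 : ℕ+) : ℕ) : ℝ)), ((f n w : ℝ) : EReal))
        Filter.atTop := by
      refine Filter.liminf_le_liminf ?_ (by isBoundedDefault) (by isBoundedDefault)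
      filter_upwards with n
      exact le_iInf₂ fun w _ => EReal.coe_le_coe_iff.mpr (hmin n w)
    have hC : Filter.liminf
        (fun n => ⨅ w ∈ Metric.ball v (1 / (((1 : ℕ+) : ℕ) : ℝ)), ((f n w : ℝ) : EReal))
        Filter.atTop ≤ Filter.limsup
        (fun n => ⨅ w ∈ Metric.ball v (1 / (((1 : ℕ+) : ℕ) : ℝ)), ((f n w : ℝ) : EReal))
        Filter.atTop := Filter.liminf_le_limsup
    have hD : Filter.limsup
        (fun n => ⨅ w ∈ Metric.ball v (1 / (((1 : ℕ+) : ℕ) : ℝ)), ((f n w : ℝ) : EReal))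
        Filter.atTop ≤ epiLimsup f v := by
      unfold epiLimsup
      exact le_iSup (fun k : ℕ+ => Filter.limsup
        (fun n => ⨅ w ∈ Metric.ball v (1 / ((k : ℕ) : ℝ)), ((f n w : ℝ) : EReal))
        Filter.atTop) (1 : ℕ+)
    exact le_trans hA (le_trans hB (le_trans hC hD))
  exact EReal.coe_le_coe_iff.mp (le_trans h1 (le_trans key h2))
end
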